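/- Closure theorem, microstate form. Let (X, μ_A) and (Y, μ_B) be σ-finite measure spaces, H_A : X → [0,∞) and H_B : Y → [0,∞) measurable, with the range of H_A equal to (0,∞), and with Z_A(β) := ∫_X exp(−β H_A) dμ_A and Z_B(β) := ∫_Y exp(−β H_B) dμ_B finite and strictly positive for all β > 0. Let ν be a Borel measure on (0,∞) such that ρ(E) := ∫₀^∞ exp(−βE) dν(β) is finite for all E > 0, and suppose the composite system is in the steady state with joint density p(x,y) := ρ(H_A(x) + H_B(y)). Let P : (0,∞) → [0,∞) be a probability density with ∫₀^∞ P(β) exp(−βε)/Z_A(β) dβ finite for all ε > 0. If the marginal of subsystem A is superstatistical with inverse temperature distribution P, i.e. for every x ∈ X, ∫_Y p(x,y) dμ_B(y) = ∫₀^∞ P(β) exp(−β H_A(x))/Z_A(β) dβ, then ν has Lebesgue density P(β)/(Z_A(β)·Z_B(β)), and consequently p(x,y) = ∫₀^∞ P(β) · exp(−β(H_A(x)+H_B(y)))/(Z_A(β)·Z_B(β)) dβ for all (x,y); i.e. the composite system AB is superstatistical with the same inverse temperature distribution P. -/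

import Mathlib

open MeasureTheory Set ENNReal

lemma cm_integrable {Ω : Type*} [MeasurableSpace Ω] [TopologicalSpace Ω] [CompactSpace Ω]
    [OpensMeasurableSpace Ω] (κ : Measure Ω) [IsFiniteMeasure κ] (g : C(Ω, ℝ)) :
    Integrable (fun x => g x) κ := by
  have := (BoundedContinuousFunction.mkOfCompact g).integrable κ
  exact this

lemma mono_int {μ : Measure ℝ} {κ : Measure (Icc (0:ℝ) 1)}
    (hmap : κ.map ((↑) : Icc (0:ℝ) 1 → ℝ) = μ) (hmem : ∀ᵐ t ∂μ, t ∈ Icc (0:ℝ) 1) (n : ℕ) :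
    ∫ x : Icc (0:ℝ) 1, (x:ℝ) ^ n ∂κ = (∫⁻ t, ENNReal.ofReal (t ^ n) ∂μ).toReal := by
  have hemb := MeasurableEmbedding.subtype_coe (measurableSet_Icc (a := (0:ℝ)) (b := 1))
  have h1 : ∫ x : Icc (0:ℝ) 1, (x:ℝ) ^ n ∂κ = ∫ t, t ^ n ∂μ := by
    rw [← hmap, hemb.integral_map]
  rw [h1, integral_eq_lintegral_of_nonneg_ae]
  · filter_upwards [hmem] with t ht using pow_nonneg ht.1 n
  · exact (measurable_id.pow_const n).aestronglyMeasurable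

lemma moments_ext (μ₁ μ₂ : Measure ℝ) [IsFiniteMeasure μ₁] [IsFiniteMeasure μ₂]
    (h₁ : μ₁ (Icc (0:ℝ) 1)ᶜ = 0) (h₂ : μ₂ (Icc (0:ℝ) 1)ᶜ = 0)
    (h : ∀ n : ℕ, ∫⁻ t, ENNReal.ofReal (t ^ n) ∂μ₁ = ∫⁻ t, ENNReal.ofReal (t ^ n) ∂μ₂) :
    μ₁ = μ₂ := by
  have hs : MeasurableSet (Icc (0:ℝ) 1) := measurableSet_Icc
  have hemb := MeasurableEmbedding.subtype_coe hs
  set κ₁ := μ₁.comap ((↑) : Icc (0:ℝ) 1 → ℝ) with hκ₁def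
  set κ₂ := μ₂.comap ((↑) : Icc (0:ℝ) 1 → ℝ) with hκ₂def
  have hmem₁ : ∀ᵐ x ∂μ₁, x ∈ Icc (0:ℝ) 1 := by
    rw [ae_iff]; simpa [compl_def] using h₁
  have hmem₂ : ∀ᵐ x ∂μ₂, x ∈ Icc (0:ℝ) 1 := by
    rw [ae_iff]; simpa [compl_def] using h₂
  have hmap₁ : κ₁.map ((↑) : Icc (0:ℝ) 1 → ℝ) = μ₁ := by
    rw [hκ₁def, map_comap_subtype_coe hs, Measure.restrict_eq_self_of_ae_mem hmem₁]
  have hmap₂ : κ₂.map ((↑) : Icc (0:ℝ) 1 → ℝ) = μ₂ := by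
    rw [hκ₂def, map_comap_subtype_coe hs, Measure.restrict_eq_self_of_ae_mem hmem₂]
  have hfin : ∀ (μ : Measure ℝ) (κ : Measure (Icc (0:ℝ) 1)), κ.map ((↑) : Icc (0:ℝ) 1 → ℝ) = μ →
      IsFiniteMeasure μ → IsFiniteMeasure κ := by
    intro μ κ hmap hfm
    constructor
    have : κ univ = μ (Icc (0:ℝ) 1) := by
      rw [← hmap, hemb.map_apply]
      simp [Subtype.coe_preimage_self]
    rw [this]; exact measure_lt_top μ _
  haveI hκf₁ : IsFiniteMeasure κ₁ := hfin _ _ hmap₁ inferInstance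
  haveI hκf₂ : IsFiniteMeasure κ₂ := hfin _ _ hmap₂ inferInstance
  -- polynomial integrals agree
  have hmonoint : ∀ (κ : Measure (Icc (0:ℝ) 1)) (_ : IsFiniteMeasure κ) (i : ℕ) (c : ℝ),
      Integrable (fun x : Icc (0:ℝ) 1 => c * (x:ℝ) ^ i) κ := by
    intro κ hκ i c
    exact cm_integrable κ ⟨fun x => c * (x:ℝ) ^ i, by fun_prop⟩
  have hpoly : ∀ q : Polynomial ℝ,
      ∫ x : Icc (0:ℝ) 1, q.eval (x:ℝ) ∂κ₁ = ∫ x : Icc (0:ℝ) 1, q.eval (x:ℝ) ∂κ₂ := by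
    intro q
    simp_rw [Polynomial.eval_eq_sum_range]
    rw [integral_finset_sum _ (fun i _ => hmonoint κ₁ hκf₁ i _),
      integral_finset_sum _ (fun i _ => hmonoint κ₂ hκf₂ i _)]
    refine Finset.sum_congr rfl fun i _ => ?_
    rw [integral_const_mul, integral_const_mul, mono_int hmap₁ hmem₁ i, mono_int hmap₂ hmem₂ i,
      h i]
  -- all continuous functions agree
  have key : ∀ g : C(Icc (0:ℝ) 1, ℝ), ∫ x, g x ∂κ₁ = ∫ x, g x ∂κ₂ := by
    intro g
    set M := (κ₁ univ).toReal + (κ₂ univ).toReal with hM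
    have hM0 : 0 ≤ M := add_nonneg ENNReal.toReal_nonneg ENNReal.toReal_nonneg
    have key2 : ∀ ε > (0:ℝ), |∫ x, g x ∂κ₁ - ∫ x, g x ∂κ₂| ≤ ε * M := by
      intro ε hε
      obtain ⟨q, hq⟩ := exists_polynomial_near_continuousMap 0 1 g ε hε
      set p := q.toContinuousMapOn (Icc (0:ℝ) 1) with hp
      have hbound : ∀ (κ : Measure (Icc (0:ℝ) 1)) (_ : IsFiniteMeasure κ),
          |∫ x, g x ∂κ - ∫ x, p x ∂κ| ≤ ε * (κ univ).toReal := by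
        intro κ hκ
        rw [← integral_sub (cm_integrable κ g) (cm_integrable κ p), ← Real.norm_eq_abs]
        calc ‖∫ x, (g x - p x) ∂κ‖ ≤ ‖p - g‖ * (κ univ).toReal := by
              apply norm_integral_le_of_norm_le_const
              filter_upwards with x
              have := ContinuousMap.norm_coe_le_norm (p - g) x
              simpa [Real.norm_eq_abs, abs_sub_comm] using this
          _ ≤ ε * (κ univ).toReal := by
              apply mul_le_mul_of_nonneg_right hq.le ENNReal.toReal_nonneg
      have hpq : ∫ x, p x ∂κ₁ = ∫ x, p x ∂κ₂ := by
        simpa [hp, Polynomial.toContinuousMapOn_apply] using hpoly q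
      have b1 := hbound κ₁ hκf₁
      have b2 := hbound κ₂ hκf₂
      rw [hM, mul_add]
      have tri := abs_sub_le (∫ x, g x ∂κ₁) (∫ x, p x ∂κ₂) (∫ x, g x ∂κ₂)
      rw [hpq] at b1
      rw [abs_sub_comm] at b2
      linarith [tri, b1, b2]
    -- conclude
    by_contra hne
    have hd : 0 < |∫ x, g x ∂κ₁ - ∫ x, g x ∂κ₂| := by
      rw [abs_pos, sub_ne_zero]; exact hne
    have hb := key2 (|∫ x, g x ∂κ₁ - ∫ x, g x ∂κ₂| / (2 * (M + 1))) (by positivity)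
    rw [div_mul_eq_mul_div, le_div_iff₀ (by positivity)] at hb
    nlinarith [hd, hM0]
  -- conclude equality of κ's, then of μ's
  have hκeq : κ₁ = κ₂ := by
    apply ext_of_forall_lintegral_eq_of_IsFiniteMeasure
    intro f
    have h1 := BoundedContinuousFunction.lintegral_lt_top_of_nnreal κ₁ f
    have h2 := BoundedContinuousFunction.lintegral_lt_top_of_nnreal κ₂ f
    rw [← ENNReal.toReal_eq_toReal_iff' h1.ne h2.ne,
      BoundedContinuousFunction.toReal_lintegral_coe_eq_integral,
      BoundedContinuousFunction.toReal_lintegral_coe_eq_integral]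
    exact key ⟨fun x => (f x : ℝ), NNReal.continuous_coe.comp f.continuous⟩
  rw [← hmap₁, ← hmap₂, hκeq]

lemma laplace_ext (m₁ m₂ : Measure ℝ) (h₁ : m₁ (Iic 0) = 0) (h₂ : m₂ (Iic 0) = 0)
    (hfin : ∫⁻ β, ENNReal.ofReal (Real.exp (-β * 1)) ∂m₁ < ⊤)
    (heq : ∀ ε > (0:ℝ), ∫⁻ β, ENNReal.ofReal (Real.exp (-β * ε)) ∂m₁
      = ∫⁻ β, ENNReal.ofReal (Real.exp (-β * ε)) ∂m₂) :
    m₁ = m₂ := by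
  set f : ℝ → ℝ≥0∞ := fun β => ENNReal.ofReal (Real.exp (-β)) with hf
  have hfm : Measurable f := by fun_prop
  -- transform of the tilted measure
  have hT : ∀ (m : Measure ℝ) (ε : ℝ),
      ∫⁻ β, ENNReal.ofReal (Real.exp (-β * ε)) ∂(m.withDensity f)
      = ∫⁻ β, ENNReal.ofReal (Real.exp (-β * (ε + 1))) ∂m := by
    intro m ε
    rw [lintegral_withDensity_eq_lintegral_mul _ hfm (by fun_prop)]
    apply lintegral_congr; intro β
    simp only [Pi.mul_apply, hf]
    rw [← ENNReal.ofReal_mul (Real.exp_pos _).le, ← Real.exp_add]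
    congr 2; ring
  have hmass : ∀ m : Measure ℝ,
      (m.withDensity f) univ = ∫⁻ β, ENNReal.ofReal (Real.exp (-β * 1)) ∂m := by
    intro m
    rw [withDensity_apply _ MeasurableSet.univ, Measure.restrict_univ]
    apply lintegral_congr; intro β; simp [hf]
  haveI : IsFiniteMeasure (m₁.withDensity f) := ⟨by rw [hmass]; exact hfin⟩
  haveI : IsFiniteMeasure (m₂.withDensity f) :=
    ⟨by rw [hmass, ← heq 1 one_pos]; exact hfin⟩
  have hnull : ∀ (m : Measure ℝ), m (Iic 0) = 0 → (m.withDensity f) (Iic 0) = 0 := by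
    intro m hm
    rw [withDensity_apply _ measurableSet_Iic, Measure.restrict_eq_zero.mpr hm]
    simp
  set φ : ℝ → ℝ := fun β => Real.exp (-β) with hφ
  have hφc : Continuous φ := by fun_prop
  have hφm : Measurable φ := hφc.measurable
  have hφinj : Function.Injective φ := fun a b hab => by
    simpa using Real.exp_injective hab
  have hφemb : MeasurableEmbedding φ := hφc.measurableEmbedding hφinj
  haveI : IsFiniteMeasure ((m₁.withDensity f).map φ) :=
    ⟨by rw [Measure.map_apply hφm MeasurableSet.univ]; exact measure_lt_top _ _⟩
  haveI : IsFiniteMeasure ((m₂.withDensity f).map φ) :=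
    ⟨by rw [Measure.map_apply hφm MeasurableSet.univ]; exact measure_lt_top _ _⟩
  have hsupp : ∀ (m' : Measure ℝ), m' (Iic 0) = 0 → (m'.map φ) (Icc (0:ℝ) 1)ᶜ = 0 := by
    intro m' hm'
    rw [Measure.map_apply hφm measurableSet_Icc.compl]
    apply measure_mono_null _ hm'
    intro β hβ
    simp only [mem_preimage, mem_compl_iff, mem_Icc, not_and_or, not_le, hφ] at hβ
    rcases hβ with h | h
    · exact absurd h (not_lt.mpr (Real.exp_pos _).le)
    · have hb : 0 < -β := by
        by_contra hc
        push_neg at hc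
        exact absurd h (not_lt.mpr (Real.exp_le_one_iff.mpr hc))
      exact mem_Iic.mpr (by linarith)
  have hmom : ∀ n : ℕ, ∫⁻ t, ENNReal.ofReal (t ^ n) ∂((m₁.withDensity f).map φ)
      = ∫⁻ t, ENNReal.ofReal (t ^ n) ∂((m₂.withDensity f).map φ) := by
    intro n
    have hmapn : ∀ m' : Measure ℝ, ∫⁻ t, ENNReal.ofReal (t ^ n) ∂(m'.map φ)
        = ∫⁻ β, ENNReal.ofReal (Real.exp (-β * n)) ∂m' := by
      intro m'
      rw [lintegral_map (by fun_prop) hφm]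
      apply lintegral_congr; intro β
      congr 1
      rw [← Real.exp_nat_mul]
      congr 1; ring
    rw [hmapn, hmapn]
    cases n with
    | zero =>
      simp only [Nat.cast_zero, mul_zero, Real.exp_zero, ENNReal.ofReal_one, lintegral_one]
      calc (m₁.withDensity f) univ = ∫⁻ β, ENNReal.ofReal (Real.exp (-β * 1)) ∂m₁ := hmass m₁
        _ = ∫⁻ β, ENNReal.ofReal (Real.exp (-β * 1)) ∂m₂ := heq 1 one_pos
        _ = (m₂.withDensity f) univ := (hmass m₂).symm
    | succ k =>
      rw [hT, hT]
      have : (0:ℝ) < (k:ℝ) + 1 + 1 := by positivity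
      have := heq ((k:ℝ) + 1 + 1) this
      convert this using 3 <;> push_cast <;> ring
  have hμeq := moments_ext _ _ (hsupp _ (hnull m₁ h₁)) (hsupp _ (hnull m₂ h₂)) hmom
  have hm' : m₁.withDensity f = m₂.withDensity f := by
    have := congrArg (fun μ => μ.comap φ) hμeq
    simpa [hφemb.comap_map] using this
  have hback : ∀ m : Measure ℝ,
      (m.withDensity f).withDensity (fun β => ENNReal.ofReal (Real.exp β)) = m := by
    intro m
    rw [← withDensity_mul _ hfm (by fun_prop)]
    have : (f * fun β => ENNReal.ofReal (Real.exp β)) = 1 := by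
      funext β
      simp only [Pi.mul_apply, hf, Pi.one_apply]
      rw [← ENNReal.ofReal_mul (Real.exp_pos _).le, ← Real.exp_add]
      simp
    rw [this, withDensity_one]
  rw [← hback m₁, ← hback m₂, hm']


/-- **Closure theorem, microstate form.** Let `(X, μA)` and `(Y, μB)` be σ-finite
measure spaces with nonnegative measurable Hamiltonians `HA` (with range `(0,∞)`) and
`HB`, whose partition functions `ZA`, `ZB` are finite and strictly positive for `β > 0`.
Suppose the composite system is in a steady state with joint density
`p(x,y) = ρ(HA x + HB y)`, where `ρ` is the Laplace transform of a Borel measure `ν`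
on `(0,∞)`, finite for positive energies. If the marginal of subsystem `A` is
superstatistical with probability density `P` of inverse temperatures, then `ν` has
Lebesgue density `P(β)/(ZA(β)·ZB(β))`, and consequently the joint ensemble is the
superstatistical mixture with the same inverse temperature distribution `P`. -/
theorem closure_of_superstatistics_microstate
    {X Y : Type*} [MeasurableSpace X] [MeasurableSpace Y]
    (μA : Measure X) (μB : Measure Y) [SigmaFinite μA] [SigmaFinite μB]
    (HA : X → ℝ) (HB : Y → ℝ) (hHAmeas : Measurable HA) (hHBmeas : Measurable HB)
    (hHA0 : ∀ x, 0 ≤ HA x) (hHB0 : ∀ y, 0 ≤ HB y)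
    (hHArange : Set.range HA = Ioi (0:ℝ))
    (ZA ZB : ℝ → ℝ)
    (hZA : ∀ β, ZA β = ∫ x, Real.exp (-β * HA x) ∂μA)
    (hZB : ∀ β, ZB β = ∫ y, Real.exp (-β * HB y) ∂μB)
    (hZAint : ∀ β > (0:ℝ), Integrable (fun x => Real.exp (-β * HA x)) μA)
    (hZBint : ∀ β > (0:ℝ), Integrable (fun y => Real.exp (-β * HB y)) μB)
    (hZApos : ∀ β > (0:ℝ), 0 < ZA β) (hZBpos : ∀ β > (0:ℝ), 0 < ZB β)
    (ν : Measure ℝ) (hν : ν (Iic 0) = 0)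
    (ρ : ℝ → ℝ≥0∞)
    (hρ : ∀ E, ρ E = ∫⁻ β, ENNReal.ofReal (Real.exp (-β * E)) ∂ν)
    (hρfin : ∀ E > (0:ℝ), ρ E < ⊤)
    (P : ℝ → ℝ) (hPmeas : Measurable P) (hP0 : ∀ β, 0 ≤ P β)
    (hPnorm : ∫ β in Ioi (0:ℝ), P β = 1)
    (hPfin : ∀ ε > (0:ℝ),
      ∫⁻ β in Ioi (0:ℝ), ENNReal.ofReal (P β * Real.exp (-β * ε) / ZA β) < ⊤)
    (hmarg : ∀ x, ∫⁻ y, ρ (HA x + HB y) ∂μB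
      = ∫⁻ β in Ioi (0:ℝ), ENNReal.ofReal (P β * Real.exp (-β * HA x) / ZA β)) :
    ν = (volume.restrict (Ioi (0:ℝ))).withDensity
        (fun β => ENNReal.ofReal (P β) / (ENNReal.ofReal (ZA β) * ENNReal.ofReal (ZB β)))
    ∧ ∀ x y, ρ (HA x + HB y)
        = ∫⁻ β in Ioi (0:ℝ),
            ENNReal.ofReal (P β * Real.exp (-β * (HA x + HB y)) / (ZA β * ZB β)) := by
  have hHApos : ∀ x, 0 < HA x := fun x => by
    have : HA x ∈ Set.range HA := mem_range_self x
    rwa [hHArange, mem_Ioi] at this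
  -- ν is sigma-finite
  have hρ1 : ∫⁻ β, ENNReal.ofReal (Real.exp (-β * 1)) ∂ν < ⊤ := by
    rw [← hρ 1]; exact hρfin 1 one_pos
  haveI hνsf : SigmaFinite ν := by
    apply Measure.sigmaFinite_of_countable
      (S := Set.range (fun n : ℕ => Iic (0:ℝ) ∪ Icc (1/((n:ℝ)+1)) ((n:ℝ)+1)))
      (countable_range _)
    · rintro s ⟨n, rfl⟩
      have hb : ENNReal.ofReal (Real.exp (-((n:ℝ)+1))) * ν (Icc (1/((n:ℝ)+1)) ((n:ℝ)+1))
          ≤ ∫⁻ β, ENNReal.ofReal (Real.exp (-β * 1)) ∂ν := by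
        rw [← setLIntegral_const]
        refine le_trans (setLIntegral_mono (by fun_prop) fun β hβ => ?_)
          (setLIntegral_le_lintegral _ _)
        exact ENNReal.ofReal_le_ofReal (Real.exp_le_exp.mpr (by nlinarith [hβ.2]))
      have hIcc : ν (Icc (1/((n:ℝ)+1)) ((n:ℝ)+1)) < ⊤ := by
        by_contra hc
        rw [not_lt, top_le_iff] at hc
        rw [hc, ENNReal.mul_top (by simp [Real.exp_pos])] at hb
        exact hρ1.not_ge hb
      calc ν (Iic (0:ℝ) ∪ Icc (1/((n:ℝ)+1)) ((n:ℝ)+1))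
          ≤ ν (Iic (0:ℝ)) + ν (Icc (1/((n:ℝ)+1)) ((n:ℝ)+1)) := measure_union_le _ _
        _ < ⊤ := by rw [hν, zero_add]; exact hIcc
    · apply eq_univ_of_forall
      intro β
      rcases le_or_gt β 0 with hβ | hβ
      · exact mem_sUnion.mpr ⟨_, ⟨0, rfl⟩, Or.inl hβ⟩
      · obtain ⟨n, hn⟩ := exists_nat_ge (max β (1/β))
        refine mem_sUnion.mpr ⟨_, ⟨n, rfl⟩, Or.inr ⟨?_, ?_⟩⟩
        · have h1 : 1/β ≤ (n:ℝ) + 1 := le_trans (le_max_right _ _) (by linarith)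
          calc 1/((n:ℝ)+1) ≤ 1/(1/β) :=
                one_div_le_one_div_of_le (by positivity) h1
            _ = β := one_div_one_div β
        · exact le_trans (le_max_left _ _) (by linarith)
  -- antitone partition functions and a.e. measurability
  have hZAanti : AntitoneOn ZA (Ioi (0:ℝ)) := by
    intro a ha b hb hab
    rw [hZA a, hZA b]
    refine integral_mono (hZAint b hb) (hZAint a ha) fun x => ?_
    exact Real.exp_le_exp.mpr (by nlinarith [hHA0 x, mem_Ioi.mp ha])
  have hZBanti : AntitoneOn ZB (Ioi (0:ℝ)) := by
    intro a ha b hb hab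
    rw [hZB a, hZB b]
    refine integral_mono (hZBint b hb) (hZBint a ha) fun y => ?_
    exact Real.exp_le_exp.mpr (by nlinarith [hHB0 y, mem_Ioi.mp ha])
  have hνmem : ∀ᵐ β ∂ν, β ∈ Ioi (0:ℝ) := by
    rw [ae_iff]
    convert hν using 2
    ext β; simp [mem_Iic, not_lt]
  have hνres : ν.restrict (Ioi 0) = ν := Measure.restrict_eq_self_of_ae_mem hνmem
  have hZBae_ν : AEMeasurable ZB ν := by
    have := aemeasurable_restrict_of_antitoneOn measurableSet_Ioi hZBanti (μ := ν)
    rwa [hνres] at this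
  have hZAaeL : AEMeasurable ZA (volume.restrict (Ioi (0:ℝ))) :=
    aemeasurable_restrict_of_antitoneOn measurableSet_Ioi hZAanti
  have hZBaeL : AEMeasurable ZB (volume.restrict (Ioi (0:ℝ))) :=
    aemeasurable_restrict_of_antitoneOn measurableSet_Ioi hZBanti
  set gB : ℝ → ℝ≥0∞ := fun β => ENNReal.ofReal (ZB β) with hgB
  have hgBae_ν : AEMeasurable gB ν := ENNReal.measurable_ofReal.comp_aemeasurable hZBae_ν
  have hgBaeL : AEMeasurable gB (volume.restrict (Ioi (0:ℝ))) :=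
    ENNReal.measurable_ofReal.comp_aemeasurable hZBaeL
  set g₂ : ℝ → ℝ≥0∞ := fun β => ENNReal.ofReal (P β / ZA β) with hg₂
  have hg₂ae : AEMeasurable g₂ (volume.restrict (Ioi (0:ℝ))) :=
    ENNReal.measurable_ofReal.comp_aemeasurable (hPmeas.aemeasurable.div hZAaeL)
  set m₁ := ν.withDensity gB with hm₁
  set m₂ := (volume.restrict (Ioi (0:ℝ))).withDensity g₂ with hm₂
  -- transform of m₁ equals the marginal of subsystem A
  have hm₁T : ∀ ε > (0:ℝ), ∫⁻ β, ENNReal.ofReal (Real.exp (-β * ε)) ∂m₁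
      = ∫⁻ y, ρ (ε + HB y) ∂μB := by
    intro ε hε
    rw [hm₁, lintegral_withDensity_eq_lintegral_mul₀ hgBae_ν (by fun_prop)]
    have hswapmeas : Measurable (Function.uncurry fun (y : Y) (β : ℝ) =>
        ENNReal.ofReal (Real.exp (-β * ε)) * ENNReal.ofReal (Real.exp (-β * (HB y)))) := by
      apply Measurable.mul (f := fun p : Y × ℝ => ENNReal.ofReal (Real.exp (-p.2 * ε)))
        (g := fun p : Y × ℝ => ENNReal.ofReal (Real.exp (-p.2 * HB p.1)))
      · exact ENNReal.measurable_ofReal.comp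
          (Real.measurable_exp.comp ((measurable_snd.neg).mul_const ε))
      · exact ENNReal.measurable_ofReal.comp
          (Real.measurable_exp.comp ((measurable_snd.neg).mul (hHBmeas.comp measurable_fst)))
    calc ∫⁻ β, ((gB * fun β => ENNReal.ofReal (Real.exp (-β * ε))) β) ∂ν
        = ∫⁻ β, ENNReal.ofReal (Real.exp (-β * ε))
            * ∫⁻ y, ENNReal.ofReal (Real.exp (-β * HB y)) ∂μB ∂ν := by
          apply lintegral_congr_ae
          filter_upwards [hνmem] with β hβ
          simp only [Pi.mul_apply, hgB]
          rw [← MeasureTheory.ofReal_integral_eq_lintegral_ofReal (hZBint β hβ)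
            (ae_of_all _ fun y => (Real.exp_pos _).le), ← hZB β, mul_comm]
      _ = ∫⁻ β, ∫⁻ y, ENNReal.ofReal (Real.exp (-β * ε))
            * ENNReal.ofReal (Real.exp (-β * HB y)) ∂μB ∂ν := by
          apply lintegral_congr fun β => ?_
          rw [lintegral_const_mul' _ _ ENNReal.ofReal_ne_top]
      _ = ∫⁻ y, ∫⁻ β, ENNReal.ofReal (Real.exp (-β * ε))
            * ENNReal.ofReal (Real.exp (-β * HB y)) ∂ν ∂μB :=
          (lintegral_lintegral_swap hswapmeas.aemeasurable).symm
      _ = ∫⁻ y, ρ (ε + HB y) ∂μB := by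
          apply lintegral_congr fun y => ?_
          rw [hρ]
          apply lintegral_congr fun β => ?_
          rw [← ENNReal.ofReal_mul (Real.exp_pos _).le, ← Real.exp_add]
          congr 2; ring
  -- transform of m₂ equals the superstatistical marginal
  have hm₂T : ∀ ε : ℝ, ∫⁻ β, ENNReal.ofReal (Real.exp (-β * ε)) ∂m₂
      = ∫⁻ β in Ioi (0:ℝ), ENNReal.ofReal (P β * Real.exp (-β * ε) / ZA β) := by
    intro ε
    rw [hm₂, lintegral_withDensity_eq_lintegral_mul₀ hg₂ae (by fun_prop)]
    apply lintegral_congr_ae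
    filter_upwards [ae_restrict_mem measurableSet_Ioi] with β hβ
    simp only [Pi.mul_apply, hg₂]
    rw [← ENNReal.ofReal_mul (div_nonneg (hP0 β) (hZApos β hβ).le)]
    congr 1
    rw [div_mul_eq_mul_div]
  -- the two tilted measures have the same Laplace transform
  have heq : ∀ ε > (0:ℝ), ∫⁻ β, ENNReal.ofReal (Real.exp (-β * ε)) ∂m₁
      = ∫⁻ β, ENNReal.ofReal (Real.exp (-β * ε)) ∂m₂ := by
    intro ε hε
    obtain ⟨x, hx⟩ : ∃ x, HA x = ε := by
      have : ε ∈ Set.range HA := by rw [hHArange]; exact hε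
      exact this
    rw [hm₁T ε hε, hm₂T ε, ← hx, hmarg x]
  have hm₁null : m₁ (Iic 0) = 0 := by
    rw [hm₁, withDensity_apply _ measurableSet_Iic, Measure.restrict_eq_zero.mpr hν,
      lintegral_zero_measure]
  have hm₂null : m₂ (Iic 0) = 0 := by
    rw [hm₂, withDensity_apply _ measurableSet_Iic, Measure.restrict_restrict measurableSet_Iic]
    have : Iic (0:ℝ) ∩ Ioi 0 = ∅ := by
      ext x; simp only [mem_inter_iff, mem_Iic, mem_Ioi, mem_empty_iff_false, iff_false, not_and,
        not_lt]
      exact fun h => h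
    rw [this, Measure.restrict_empty, lintegral_zero_measure]
  have hm₁fin : ∫⁻ β, ENNReal.ofReal (Real.exp (-β * 1)) ∂m₁ < ⊤ := by
    rw [heq 1 one_pos, hm₂T 1]
    exact hPfin 1 one_pos
  have hmeq : m₁ = m₂ := laplace_ext m₁ m₂ hm₁null hm₂null hm₁fin heq
  -- recover ν
  have hν_eq : ν = (volume.restrict (Ioi (0:ℝ))).withDensity
      (fun β => ENNReal.ofReal (P β) / (ENNReal.ofReal (ZA β) * ENNReal.ofReal (ZB β))) := by
    have h1 : ν.withDensity (gB * fun β => (gB β)⁻¹) = m₁.withDensity (fun β => (gB β)⁻¹) :=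
      withDensity_mul₀ hgBae_ν hgBae_ν.inv
    have h2 : (gB * fun β => (gB β)⁻¹) =ᵐ[ν] 1 := by
      filter_upwards [hνmem] with β hβ
      simp only [Pi.mul_apply, Pi.one_apply]
      exact ENNReal.mul_inv_cancel (by simp [hgB, hZBpos β hβ]) ENNReal.ofReal_ne_top
    have h3 : ν = m₁.withDensity (fun β => (gB β)⁻¹) := by
      rw [← h1, withDensity_congr_ae h2, withDensity_one]
    rw [h3, hmeq, hm₂, ← withDensity_mul₀ (g := fun β => (gB β)⁻¹) hg₂ae hgBaeL.inv]
    apply withDensity_congr_ae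
    filter_upwards [ae_restrict_mem measurableSet_Ioi] with β hβ
    simp only [Pi.mul_apply, hg₂, hgB]
    rw [ENNReal.ofReal_div_of_pos (hZApos β hβ), div_eq_mul_inv, div_eq_mul_inv,
      ENNReal.mul_inv (Or.inl (by simp [hZApos β hβ])) (Or.inl ENNReal.ofReal_ne_top), mul_assoc]
  refine ⟨hν_eq, fun x y => ?_⟩
  -- the joint ensemble
  have hE : (0:ℝ) < HA x + HB y := by nlinarith [hHApos x, hHB0 y]
  have hDae : AEMeasurable (fun β => ENNReal.ofReal (P β)
      / (ENNReal.ofReal (ZA β) * ENNReal.ofReal (ZB β))) (volume.restrict (Ioi (0:ℝ))) :=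
    ((ENNReal.measurable_ofReal.comp hPmeas).aemeasurable).div
      ((ENNReal.measurable_ofReal.comp_aemeasurable hZAaeL).mul hgBaeL)
  rw [hρ, hν_eq, lintegral_withDensity_eq_lintegral_mul₀ hDae (by fun_prop)]
  apply lintegral_congr_ae
  filter_upwards [ae_restrict_mem measurableSet_Ioi] with β hβ
  simp only [Pi.mul_apply]
  rw [ENNReal.ofReal_div_of_pos (mul_pos (hZApos β hβ) (hZBpos β hβ)),
    ENNReal.ofReal_mul (hP0 β), ENNReal.ofReal_mul (hZApos β hβ).le]
  simp only [div_eq_mul_inv]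
  rw [mul_right_comm]
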